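/- Let C be a partial affine plane every finite subset of which is open, let A ⊆ C be such that A ≤_o C, and let c ∈ C ∖ A be such that one of the following holds: (a) c is a point incident with exactly two lines of A; (b) c is a line incident with exactly two points of A and parallel to no line of A; (c) c is a line incident with exactly one point of A and parallel to some line of A. Then A ∪ {c} ≤_o C. -/

import Mathlib

namespace Affine

variable {P L : Type}

/-- The lines of `X` incident with the point `p`. -/
def linesThru (I : P → L → Prop) (X : Set (P ⊕ L)) (p : P) : Set L :=
  {l : L | Sum.inr l ∈ X ∧ I p l}

/-- The points of `X` incident with the line `l`. -/
def pointsOn (I : P → L → Prop) (X : Set (P ⊕ L)) (l : L) : Set P :=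
  {p : P | Sum.inl p ∈ X ∧ I p l}

/-- An element is hyperfree in `X` if it is a point incident with at most two lines of `X`,
or a line incident with at most one point of `X`, or a line incident with exactly two points
of `X` and parallel to no other line of `X`. -/
def Hyperfree (I : P → L → Prop) (Par : L → L → Prop) (X : Set (P ⊕ L)) :
    (P ⊕ L) → Prop
  | Sum.inl p => (linesThru I X p).encard ≤ 2
  | Sum.inr l => (pointsOn I X l).encard ≤ 1 ∨
      ((pointsOn I X l).encard = 2 ∧
        ∀ l' : L, Sum.inr l' ∈ X → l' ≠ l → ¬ Par l l')

/-- `B` is open over `A`. -/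
def OpenOver (I : P → L → Prop) (Par : L → L → Prop) (A B : Set (P ⊕ L)) : Prop :=
  ∀ C : Set (P ⊕ L), C ⊆ B \ A → C.Finite → C.Nonempty →
    ∃ c ∈ C, Hyperfree I Par (A ∪ C) c

/-- `B` is open. -/
def IsOpen (I : P → L → Prop) (Par : L → L → Prop) (B : Set (P ⊕ L)) : Prop :=
  ∀ C : Set (P ⊕ L), C ⊆ B → C.Finite → C.Nonempty →
    ∃ c ∈ C, Hyperfree I Par C c

/-- `X` is a partial affine plane: parallelism is an equivalence relation on lines of `X`;
two distinct points of `X` are incident with at most one common line of `X`; two non-parallel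
lines of `X` are incident with at most one common point of `X`; for every point of `X` and
every line of `X` there is at most one line of `X` incident with the point and parallel to
the line. -/
def IsPartialAffine (I : P → L → Prop) (Par : L → L → Prop) (X : Set (P ⊕ L)) : Prop :=
  (∀ l : L, Sum.inr l ∈ X → Par l l) ∧
  (∀ l l' : L, Sum.inr l ∈ X → Sum.inr l' ∈ X → Par l l' → Par l' l) ∧
  (∀ l l' l'' : L, Sum.inr l ∈ X → Sum.inr l' ∈ X → Sum.inr l'' ∈ X →
    Par l l' → Par l' l'' → Par l l'') ∧
  (∀ p q : P, p ≠ q → Sum.inl p ∈ X → Sum.inl q ∈ X →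
    ∀ l l' : L, Sum.inr l ∈ X → Sum.inr l' ∈ X →
      I p l → I q l → I p l' → I q l' → l = l') ∧
  (∀ l l' : L, ¬ Par l l' → Sum.inr l ∈ X → Sum.inr l' ∈ X →
    ∀ p q : P, Sum.inl p ∈ X → Sum.inl q ∈ X →
      I p l → I p l' → I q l → I q l' → p = q) ∧
  (∀ p : P, Sum.inl p ∈ X → ∀ l : L, Sum.inr l ∈ X →
    ∀ l' l'' : L, Sum.inr l' ∈ X → Sum.inr l'' ∈ X →
      I p l' → Par l' l → I p l'' → Par l'' l → l' = l'')

end Affine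

open Affine

theorem stmt15 {P L : Type} (I : P → L → Prop) (Par : L → L → Prop)
    (hpartial : IsPartialAffine I Par (Set.univ : Set (P ⊕ L)))
    (hopen : IsOpen I Par (Set.univ : Set (P ⊕ L)))
    (A : Set (P ⊕ L)) (hA : OpenOver I Par A Set.univ)
    (c : P ⊕ L) (hc : c ∉ A)
    (hcase :
      -- (a) c is a point incident with exactly two lines of A:
      (∃ p : P, c = Sum.inl p ∧ (linesThru I A p).encard = 2) ∨
      -- (b) c is a line incident with exactly two points of A and parallel to no line of A:
      (∃ l : L, c = Sum.inr l ∧ (pointsOn I A l).encard = 2 ∧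
        ∀ l' : L, Sum.inr l' ∈ A → ¬ Par l l') ∨
      -- (c) c is a line incident with exactly one point of A and parallel to a line of A:
      (∃ l : L, c = Sum.inr l ∧ (pointsOn I A l).encard = 1 ∧
        ∃ l' : L, Sum.inr l' ∈ A ∧ Par l l')) :
    OpenOver I Par (A ∪ {c}) Set.univ := by
  intro C hC hCfin hCne
  have hCA : C ⊆ Set.univ \ A := fun x hx => ⟨trivial, fun hxA => (hC hx).2 (Or.inl hxA)⟩
  have hcC : c ∉ C := fun h => (hC h).2 (Or.inr rfl)
  have hCcsub : C ∪ {c} ⊆ Set.univ \ A := by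
    intro x hx
    rcases hx with hx | hx
    · exact hCA hx
    · rcases hx with rfl; exact ⟨trivial, hc⟩
  have hXeq : A ∪ (C ∪ {c}) = (A ∪ {c}) ∪ C := by
    rw [Set.union_comm C, ← Set.union_assoc]
  obtain ⟨d, hdC, hdfree⟩ := hA (C ∪ {c}) hCcsub (hCfin.union (Set.finite_singleton c))
    ⟨c, Or.inr rfl⟩
  rw [hXeq] at hdfree
  rcases hdC with hdC | hdc
  · exact ⟨d, hdC, hdfree⟩
  rw [show d = c from hdc] at hdfree
  -- now c is hyperfree in (A ∪ {c}) ∪ C; find a hyperfree element in C instead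
  set X := (A ∪ {c}) ∪ C with hX
  have hAX : A ⊆ X := fun x hx => Or.inl (Or.inl hx)
  obtain ⟨hsym, htrans⟩ : (∀ l l' : L, Par l l' → Par l' l) ∧
      (∀ l l' l'' : L, Par l l' → Par l' l'' → Par l l'') := by
    obtain ⟨_, h2, h3, _⟩ := hpartial
    exact ⟨fun l l' h => h2 l l' trivial trivial h,
      fun l l' l'' h h' => h3 l l' l'' trivial trivial trivial h h'⟩
  obtain ⟨e, heC, hefree⟩ := hA C hCA hCfin hCne
  refine ⟨e, heC, ?_⟩
  have heA : e ∉ A := fun h => ((hCA heC).2 h)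
  rcases hcase with ⟨p, rfl, hp2⟩ | ⟨l, rfl, hl2, hlpar⟩ | ⟨l, rfl, hl1, l₀, hl₀A, hl₀par⟩
  · -- case (a): c = inl p with exactly two lines of A
    have hfree : (linesThru I X p).encard ≤ 2 := hdfree
    have hsub : linesThru I A p ⊆ linesThru I X p := fun m hm => ⟨hAX hm.1, hm.2⟩
    have hfin : (linesThru I A p).Finite := Set.finite_of_encard_eq_coe hp2
    have heqset : linesThru I A p = linesThru I X p :=
      hfin.eq_of_subset_of_encard_le hsub (by rw [hp2]; exact hfree)
    -- no line of C passes through p, and no line of X \ A does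
    have hnoline : ∀ m : L, Sum.inr m ∈ X → I p m → Sum.inr m ∈ A := by
      intro m hm him
      have : m ∈ linesThru I A p := heqset ▸ ⟨hm, him⟩
      exact this.1
    match e, heC, heA, hefree with
    | Sum.inl q, heC, heA, hefree =>
      have : linesThru I X q = linesThru I (A ∪ C) q := by
        ext m
        constructor
        · rintro ⟨(hm | hm) | hm, him⟩
          · exact ⟨Or.inl hm, him⟩
          · exact absurd hm (by simp)
          · exact ⟨Or.inr hm, him⟩
        · rintro ⟨hm | hm, him⟩
          · exact ⟨Or.inl (Or.inl hm), him⟩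
          · exact ⟨Or.inr hm, him⟩
      show (linesThru I X q).encard ≤ 2
      rw [this]; exact hefree
    | Sum.inr m, heC, heA, hefree =>
      have hpts : pointsOn I X m = pointsOn I (A ∪ C) m := by
        ext q
        constructor
        · rintro ⟨(hq | hq) | hq, hiq⟩
          · exact ⟨Or.inl hq, hiq⟩
          · exfalso
            have hq' : q = p := by simpa using hq
            subst hq'
            exact heA (hnoline m (Or.inr heC) hiq)
          · exact ⟨Or.inr hq, hiq⟩
        · rintro ⟨hq | hq, hiq⟩
          · exact ⟨Or.inl (Or.inl hq), hiq⟩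
          · exact ⟨Or.inr hq, hiq⟩
      show (pointsOn I X m).encard ≤ 1 ∨
        ((pointsOn I X m).encard = 2 ∧ ∀ l' : L, Sum.inr l' ∈ X → l' ≠ m → ¬ Par m l')
      rw [hpts]
      rcases hefree with h1 | ⟨h2, hpar⟩
      · exact Or.inl h1
      · refine Or.inr ⟨h2, ?_⟩
        intro l' hl' hne
        rcases hl' with (hl' | hl') | hl'
        · exact hpar l' (Or.inl hl') hne
        · exact absurd hl' (by simp)
        · exact hpar l' (Or.inr hl') hne
  · -- case (b): c = inr l with exactly two points of A, parallel to no line of A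
    have hfree : (pointsOn I X l).encard ≤ 1 ∨
        ((pointsOn I X l).encard = 2 ∧ ∀ l' : L, Sum.inr l' ∈ X → l' ≠ l → ¬ Par l l') := hdfree
    have hsub : pointsOn I A l ⊆ pointsOn I X l := fun q hq => ⟨hAX hq.1, hq.2⟩
    have hfin : (pointsOn I A l).Finite := Set.finite_of_encard_eq_coe hl2
    have hge : (2 : ℕ∞) ≤ (pointsOn I X l).encard := hl2 ▸ Set.encard_mono hsub
    rcases hfree with h1 | ⟨h2, hpar⟩
    · exact absurd (hge.trans h1) (by norm_num)
    have heqset : pointsOn I A l = pointsOn I X l :=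
      hfin.eq_of_subset_of_encard_le hsub (by rw [hl2, h2])
    have hnopt : ∀ q : P, Sum.inl q ∈ X → I q l → Sum.inl q ∈ A := by
      intro q hq hiq
      have : q ∈ pointsOn I A l := heqset ▸ ⟨hq, hiq⟩
      exact this.1
    match e, heC, heA, hefree with
    | Sum.inl q, heC, heA, hefree =>
      have : linesThru I X q = linesThru I (A ∪ C) q := by
        ext m
        constructor
        · rintro ⟨(hm | hm) | hm, him⟩
          · exact ⟨Or.inl hm, him⟩
          · exfalso
            have hm' : m = l := by simpa using hm
            subst hm'
            exact heA (hnopt q (Or.inr heC) him)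
          · exact ⟨Or.inr hm, him⟩
        · rintro ⟨hm | hm, him⟩
          · exact ⟨Or.inl (Or.inl hm), him⟩
          · exact ⟨Or.inr hm, him⟩
      show (linesThru I X q).encard ≤ 2
      rw [this]; exact hefree
    | Sum.inr m, heC, heA, hefree =>
      have hpts : pointsOn I X m = pointsOn I (A ∪ C) m := by
        ext q
        constructor
        · rintro ⟨(hq | hq) | hq, hiq⟩
          · exact ⟨Or.inl hq, hiq⟩
          · exact absurd hq (by simp)
          · exact ⟨Or.inr hq, hiq⟩
        · rintro ⟨hq | hq, hiq⟩
          · exact ⟨Or.inl (Or.inl hq), hiq⟩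
          · exact ⟨Or.inr hq, hiq⟩
      show (pointsOn I X m).encard ≤ 1 ∨
        ((pointsOn I X m).encard = 2 ∧ ∀ l' : L, Sum.inr l' ∈ X → l' ≠ m → ¬ Par m l')
      rw [hpts]
      rcases hefree with h1 | ⟨h2', hpar'⟩
      · exact Or.inl h1
      refine Or.inr ⟨h2', ?_⟩
      intro l' hl' hne
      rcases hl' with (hl' | hl') | hl'
      · exact hpar' l' (Or.inl hl') hne
      · have hl'' : l' = l := by simpa using hl'
        rw [hl'']
        intro hpml
        have hml : m ≠ l := fun h => hcC (h ▸ heC)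
        exact hpar m (Or.inr heC) hml (hsym m l hpml)
      · exact hpar' l' (Or.inr hl') hne
  · -- case (c): c = inr l with exactly one point of A, parallel to l₀ ∈ A
    have hfree : (pointsOn I X l).encard ≤ 1 ∨
        ((pointsOn I X l).encard = 2 ∧ ∀ l' : L, Sum.inr l' ∈ X → l' ≠ l → ¬ Par l l') := hdfree
    have hl₀ne : l₀ ≠ l := fun h => hc (h ▸ hl₀A)
    rcases hfree with h1 | ⟨h2, hpar⟩
    swap
    · exact (hpar l₀ (hAX hl₀A) hl₀ne hl₀par).elim
    have hsub : pointsOn I A l ⊆ pointsOn I X l := fun q hq => ⟨hAX hq.1, hq.2⟩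
    have hfin : (pointsOn I A l).Finite := Set.finite_of_encard_eq_coe hl1
    have heqset : pointsOn I A l = pointsOn I X l :=
      hfin.eq_of_subset_of_encard_le hsub (by rw [hl1]; exact h1)
    have hnopt : ∀ q : P, Sum.inl q ∈ X → I q l → Sum.inl q ∈ A := by
      intro q hq hiq
      have : q ∈ pointsOn I A l := heqset ▸ ⟨hq, hiq⟩
      exact this.1
    match e, heC, heA, hefree with
    | Sum.inl q, heC, heA, hefree =>
      have : linesThru I X q = linesThru I (A ∪ C) q := by
        ext m
        constructor
        · rintro ⟨(hm | hm) | hm, him⟩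
          · exact ⟨Or.inl hm, him⟩
          · exfalso
            have hm' : m = l := by simpa using hm
            subst hm'
            exact heA (hnopt q (Or.inr heC) him)
          · exact ⟨Or.inr hm, him⟩
        · rintro ⟨hm | hm, him⟩
          · exact ⟨Or.inl (Or.inl hm), him⟩
          · exact ⟨Or.inr hm, him⟩
      show (linesThru I X q).encard ≤ 2
      rw [this]; exact hefree
    | Sum.inr m, heC, heA, hefree =>
      have hpts : pointsOn I X m = pointsOn I (A ∪ C) m := by
        ext q
        constructor
        · rintro ⟨(hq | hq) | hq, hiq⟩
          · exact ⟨Or.inl hq, hiq⟩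
          · exact absurd hq (by simp)
          · exact ⟨Or.inr hq, hiq⟩
        · rintro ⟨hq | hq, hiq⟩
          · exact ⟨Or.inl (Or.inl hq), hiq⟩
          · exact ⟨Or.inr hq, hiq⟩
      show (pointsOn I X m).encard ≤ 1 ∨
        ((pointsOn I X m).encard = 2 ∧ ∀ l' : L, Sum.inr l' ∈ X → l' ≠ m → ¬ Par m l')
      rw [hpts]
      rcases hefree with h1' | ⟨h2', hpar'⟩
      · exact Or.inl h1'
      refine Or.inr ⟨h2', ?_⟩
      intro l' hl' hne
      rcases hl' with (hl' | hl') | hl'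
      · exact hpar' l' (Or.inl hl') hne
      · have hl'' : l' = l := by simpa using hl'
        rw [hl'']
        intro hpml
        have hml₀ : Par m l₀ := htrans m l l₀ hpml hl₀par
        have hml₀ne : l₀ ≠ m := fun h => heA (h ▸ hl₀A)
        exact hpar' l₀ (Or.inl hl₀A) hml₀ne hml₀
      · exact hpar' l' (Or.inr hl') hne
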